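/- Every finite connected vertex-transitive cubic simple graph is 3-connected: if G is a finite connected simple graph on vertex set V in which every vertex has degree exactly 3 and such that for all u,v ∈ V there exists a graph automorphism of G mapping u to v, then for every set A ⊆ V with |A| ≤ 2, the subgraph of G induced on V ∖ A is connected. -/

import Mathlib

open SimpleGraph Set

set_option linter.unusedSectionVars false

namespace VT3

variable {V : Type*} [Fintype V] {G : SimpleGraph V} {A B : Set V} {u v w z : V}

/-- `u` and `v` are joined by a walk avoiding the vertex set `A`. -/
def Avoid (G : SimpleGraph V) (A : Set V) (u v : V) : Prop :=
  ∃ p : G.Walk u v, ∀ x ∈ p.support, x ∉ A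

lemma Avoid.start_not_mem (h : Avoid G A u v) : u ∉ A := by
  obtain ⟨p, hp⟩ := h; exact hp u p.start_mem_support

lemma Avoid.end_not_mem (h : Avoid G A u v) : v ∉ A := by
  obtain ⟨p, hp⟩ := h; exact hp v p.end_mem_support

lemma avoid_refl (hu : u ∉ A) : Avoid G A u u :=
  ⟨Walk.nil, by simpa using hu⟩

lemma Avoid.symm (h : Avoid G A u v) : Avoid G A v u := by
  obtain ⟨p, hp⟩ := h
  exact ⟨p.reverse, by simpa using hp⟩

lemma Avoid.trans (h : Avoid G A u v) (h' : Avoid G A v w) : Avoid G A u w := by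
  obtain ⟨p, hp⟩ := h; obtain ⟨q, hq⟩ := h'
  refine ⟨p.append q, fun x hx => ?_⟩
  rw [Walk.mem_support_append_iff] at hx
  exact hx.elim (hp x) (hq x)

lemma Avoid.step (h : Avoid G A u v) (ha : G.Adj v z) (hz : z ∉ A) : Avoid G A u z := by
  obtain ⟨p, hp⟩ := h
  refine ⟨p.append (ha.toWalk), fun x hx => ?_⟩
  rw [Walk.mem_support_append_iff] at hx
  rcases hx with hx | hx
  · exact hp x hx
  · simp only [Walk.support_cons, Walk.support_nil, List.mem_cons,
      List.mem_singleton, List.not_mem_nil, or_false] at hx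
    rcases hx with rfl | rfl
    · exact hp x p.end_mem_support
    · exact hz

lemma Avoid.mono (hBA : B ⊆ A) (h : Avoid G A u v) : Avoid G B u v := by
  obtain ⟨p, hp⟩ := h
  exact ⟨p, fun x hx hxB => hp x hx (hBA hxB)⟩

lemma Avoid.map (e : G ≃g G) (h : Avoid G A u v) : Avoid G (e '' A) (e u) (e v) := by
  obtain ⟨p, hp⟩ := h
  refine ⟨p.map e.toHom, fun x hx => ?_⟩
  rw [Walk.support_map, List.mem_map] at hx
  obtain ⟨y, hy, rfl⟩ := hx
  rintro ⟨y', hy', hyy⟩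
  exact hp y hy (by rwa [e.injective hyy] at hy')

/-- Confinement: a walk starting in `X` and avoiding `A` stays inside `X`,
if the neighborhood of `X` is contained in `X ∪ A`. -/
lemma walk_confine {X : Set V} (hcl : ∀ c ∈ X, ∀ z, G.Adj c z → z ∈ X ∪ A) :
    ∀ {u v : V} (p : G.Walk u v), (∀ x ∈ p.support, x ∉ A) → u ∈ X → v ∈ X := by
  intro u v p
  induction p with
  | nil => exact fun _ hu => hu
  | @cons a b c hab q ih =>
    intro hp hu
    have hbA : b ∉ A := hp b (by simp)
    have hbX : b ∈ X := by
      rcases hcl a hu b hab with hx | hx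
      · exact hx
      · exact absurd hx hbA
    exact ih (fun x hx => hp x (by simp [hx])) hbX

lemma Avoid.confine {X : Set V} (hcl : ∀ c ∈ X, ∀ z, G.Adj c z → z ∈ X ∪ A)
    (hu : u ∈ X) (h : Avoid G A u v) : v ∈ X := by
  obtain ⟨p, hp⟩ := h
  exact walk_confine hcl p hp hu

lemma not_avoid_of_confine {X : Set V} (hcl : ∀ c ∈ X, ∀ z, G.Adj c z → z ∈ X ∪ A)
    (hu : u ∈ X) (hv : v ∉ X) : ¬ Avoid G A u v :=
  fun h => hv (h.confine hcl hu)

/-- The fragment of `u` with respect to the deleted set `A`. -/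
def frag (G : SimpleGraph V) (A : Set V) (u : V) : Set V := {w | Avoid G A u w}

lemma frag_disjoint (A : Set V) (u : V) : ∀ w ∈ frag G A u, w ∉ A :=
  fun _ h => h.end_not_mem

lemma mem_frag_self (hu : u ∉ A) : u ∈ frag G A u := avoid_refl hu

lemma frag_closed : ∀ c ∈ frag G A u, ∀ z, G.Adj c z → z ∈ frag G A u ∪ A := by
  intro c hc z hz
  by_cases hzA : z ∈ A
  · exact Or.inr hzA
  · exact Or.inl (Avoid.step hc hz hzA)

lemma frag_subset_of_confine {X : Set V} (hcl : ∀ c ∈ X, ∀ z, G.Adj c z → z ∈ X ∪ A)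
    (hu : u ∈ X) : frag G A u ⊆ X := fun _ h => h.confine hcl hu

lemma frag_map (e : G ≃g G) (A : Set V) (u : V) :
    frag G (e '' A) (e u) = e '' frag G A u := by
  ext w
  constructor
  · intro hw
    refine ⟨e.symm w, ?_, by simp⟩
    have := hw.map e.symm
    simp only [RelIso.symm_apply_apply] at this
    have himg : e.symm '' (⇑e '' A) = A := by
      rw [Set.image_image]; simp
    rwa [himg] at this
  · rintro ⟨y, hy, rfl⟩
    exact hy.map e

end VT3

namespace VT3

variable {V : Type*} [Fintype V] {G : SimpleGraph V} {A : Set V} {u v : V}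

lemma avoid_empty (hconn : G.Connected) (u v : V) : Avoid G (∅ : Set V) u v :=
  ⟨(hconn u v).some, by simp⟩

lemma exists_good_vertex (hconn : G.Connected) :
    ∃ z : V, ∀ u w, u ≠ z → w ≠ z → Avoid G {z} u w := by
  classical
  haveI : Nonempty V := hconn.nonempty
  obtain ⟨u0⟩ := ‹Nonempty V›
  obtain ⟨z, -, hz⟩ := Finset.exists_max_image Finset.univ (G.dist u0) ⟨u0, Finset.mem_univ _⟩
  have claim : ∀ w, w ≠ z → Avoid G {z} u0 w := by
    intro w hw
    obtain ⟨p, hp⟩ := hconn.exists_walk_length_eq_dist u0 w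
    refine ⟨p, fun x hx => ?_⟩
    simp only [Set.mem_singleton_iff]
    rintro rfl
    have h1 : G.dist u0 x ≤ (p.takeUntil x hx).length := dist_le _
    have h2 : G.dist x w ≤ (p.dropUntil x hx).length := dist_le _
    have h3 : (p.takeUntil x hx).length + (p.dropUntil x hx).length = p.length := by
      rw [← Walk.length_append, p.take_spec hx]
    have h4 : G.dist u0 w ≤ G.dist u0 x := hz w (Finset.mem_univ _)
    have h5 : G.dist x w = 0 := by omega
    exact hw (hconn.dist_eq_zero_iff.mp h5).symm
  refine ⟨z, fun u w hu hw => ?_⟩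
  have hu0 : u0 ≠ z := by
    rintro rfl
    have h4 : G.dist u0 u ≤ G.dist u0 u0 := hz u (Finset.mem_univ _)
    simp only [SimpleGraph.dist_self, Nat.le_zero] at h4
    exact hu (hconn.dist_eq_zero_iff.mp h4).symm
  exact (claim u hu).symm.trans (claim w hw)

lemma avoid_single (hconn : G.Connected) (htrans : ∀ u v : V, ∃ e : G ≃g G, e u = v)
    {a u v : V} (hu : u ≠ a) (hv : v ≠ a) : Avoid G {a} u v := by
  obtain ⟨z, hz⟩ := exists_good_vertex hconn
  obtain ⟨e, he⟩ := htrans z a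
  have h1 : e.symm u ≠ z := fun h => hu (by rw [← he, ← h, RelIso.apply_symm_apply])
  have h2 : e.symm v ≠ z := fun h => hv (by rw [← he, ← h, RelIso.apply_symm_apply])
  have h3 := (hz _ _ h1 h2).map e
  rw [Set.image_singleton, he, RelIso.apply_symm_apply, RelIso.apply_symm_apply] at h3
  exact h3

lemma cut_nbr (hconn : G.Connected) (htrans : ∀ u v : V, ∃ e : G ≃g G, e u = v)
    {a b u v : V}
    (hu : u ∉ ({a, b} : Set V)) (hv : v ∉ ({a, b} : Set V))
    (hna : ¬ Avoid G {a, b} u v) :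
    ∃ r, r ∈ frag G {a, b} u ∧ G.Adj a r := by
  simp only [Set.mem_insert_iff, Set.mem_singleton_iff, not_or] at hu hv
  obtain ⟨p, hp⟩ := avoid_single hconn htrans hu.2 hv.2
  have huC : u ∈ frag G {a, b} u := mem_frag_self (by simp [hu.1, hu.2])
  have hvC : v ∉ frag G {a, b} u := hna
  obtain ⟨d, hd, hfst, hsnd⟩ := p.exists_boundary_dart (frag G {a, b} u) huC hvC
  have hadj : G.Adj d.fst d.snd := d.adj
  have hcl : d.snd ∈ frag G {a, b} u ∪ {a, b} := frag_closed d.fst hfst d.snd hadj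
  have hsb : d.snd ≠ b := by
    have hmem : d.snd ∈ p.support := p.dart_snd_mem_support_of_mem_darts hd
    exact fun h => hp _ hmem (by simp [h])
  have hsa : d.snd = a := by
    rcases hcl with h | h
    · exact absurd h hsnd
    · simpa [hsb] using h
  exact ⟨d.fst, hfst, hsa ▸ hadj.symm⟩

lemma frag_two_le (hcubic : ∀ v : V, (G.neighborSet v).ncard = 3)
    {a b u : V} (hu : u ∉ ({a, b} : Set V)) : 2 ≤ (frag G {a, b} u).ncard := by
  by_contra h
  push_neg at h
  have huC : u ∈ frag G {a, b} u := mem_frag_self hu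
  have h1 : (frag G {a, b} u).ncard = 1 := by
    have : 0 < (frag G {a, b} u).ncard :=
      (Set.ncard_pos (Set.toFinite _)).mpr ⟨u, huC⟩
    omega
  obtain ⟨x, hx⟩ := Set.ncard_eq_one.mp h1
  have hux : u = x := by rw [hx] at huC; exact huC
  subst hux
  have hsub : G.neighborSet u ⊆ {a, b} := by
    intro z hz
    rcases frag_closed u huC z hz with h' | h'
    · exact absurd (hx ▸ h' : z ∈ ({u} : Set V)) (by rintro rfl; exact G.irrefl hz)
    · exact h'
  have := Set.ncard_le_ncard hsub (Set.toFinite _)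
  rw [hcubic u] at this
  have hle : ({a, b} : Set V).ncard ≤ 2 := by
    apply (Set.ncard_insert_le _ _).trans
    simp
  omega

end VT3

namespace VT3

variable {V : Type*} [Fintype V] {G : SimpleGraph V}

lemma ncard_triple {P Q R T : Set V} (hP : P ⊆ T) (hQ : Q ⊆ T) (hR : R ⊆ T)
    (hPQ : ∀ w ∈ P, w ∉ Q) (hPR : ∀ w ∈ P, w ∉ R) (hQR : ∀ w ∈ Q, w ∉ R) :
    P.ncard + Q.ncard + R.ncard ≤ T.ncard := by
  have h1 : (P ∪ Q ∪ R).ncard = P.ncard + Q.ncard + R.ncard := by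
    rw [Set.ncard_union_eq ?d1 (Set.toFinite _) (Set.toFinite _),
        Set.ncard_union_eq ?d2 (Set.toFinite _) (Set.toFinite _)]
    case d2 => exact Set.disjoint_left.mpr (fun w hw hw2 => hPQ w hw hw2)
    case d1 =>
      exact Set.disjoint_left.mpr (fun w hw hw2 => hw.elim
        (fun h => hPR w h hw2) (fun h => hQR w h hw2))
  rw [← h1]
  exact Set.ncard_le_ncard (Set.union_subset (Set.union_subset hP hQ) hR) (Set.toFinite _)

lemma two_closed (hcubic : ∀ v : V, (G.neighborSet v).ncard = 3)
    {x y p1 p2 : V}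
    (hcl : ∀ z, G.Adj x z → z ∈ ({x, y} : Set V) ∪ {p1, p2}) :
    G.neighborSet x = {y, p1, p2} := by
  have hsub : G.neighborSet x ⊆ {y, p1, p2} := by
    intro z hz
    have hne : z ≠ x := (G.ne_of_adj hz).symm
    rcases hcl z hz with h | h
    · rcases h with h | h
      · exact absurd h hne
      · exact Or.inl h
    · exact Or.inr h
  have hcard : ({y, p1, p2} : Set V).ncard ≤ (G.neighborSet x).ncard := by
    rw [hcubic x]
    calc ({y, p1, p2} : Set V).ncard ≤ ({p1, p2} : Set V).ncard + 1 := Set.ncard_insert_le _ _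
      _ ≤ (({p2} : Set V).ncard + 1) + 1 := by
          have := Set.ncard_insert_le p1 ({p2} : Set V); omega
      _ ≤ 3 := by rw [Set.ncard_singleton]
  exact (Set.eq_of_subset_of_ncard_le hsub hcard (Set.toFinite _))

/-- The key counting argument: two crossing 2-cuts with all four "diagonal"
regions dealt with. -/
lemma diag (hconn : G.Connected) (htrans : ∀ u v : V, ∃ e : G ≃g G, e u = v)
    {S T C D F E : Set V} {m : ℕ} {x y z : V}
    (hmin : ∀ a b u v : V, u ∉ ({a, b} : Set V) → v ∉ ({a, b} : Set V) →
      ¬ Avoid G {a, b} u v → m ≤ (frag G {a, b} u).ncard)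
    (hCm : C.ncard ≤ m)
    (hCcl : ∀ c ∈ C, ∀ w, G.Adj c w → w ∈ C ∪ S)
    (hDcl : ∀ c ∈ D, ∀ w, G.Adj c w → w ∈ D ∪ S)
    (hFcl : ∀ c ∈ F, ∀ w, G.Adj c w → w ∈ F ∪ T)
    (hEcl : ∀ c ∈ E, ∀ w, G.Adj c w → w ∈ E ∪ T)
    (hCS : ∀ w ∈ C, w ∉ S) (hDS : ∀ w ∈ D, w ∉ S) (hCD : ∀ w ∈ C, w ∉ D)
    (hFT : ∀ w ∈ F, w ∉ T) (hET : ∀ w ∈ E, w ∉ T) (hFE : ∀ w ∈ F, w ∉ E)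
    (hS2 : S.ncard ≤ 2) (hT2 : T.ncard ≤ 2)
    (hxC : x ∈ C) (hxT : x ∈ T)
    (hyC : y ∈ C) (hyF : y ∈ F)
    (hzD : z ∈ D) (hzE : z ∈ E) : False := by
  classical
  set W : Set V := (C ∩ T) ∪ (S ∩ F) ∪ (S ∩ T) with hW
  set W' : Set V := (D ∩ T) ∪ (S ∩ E) ∪ (S ∩ T) with hW'
  have closure1 : ∀ c ∈ C ∩ F, ∀ w, G.Adj c w → w ∈ (C ∩ F) ∪ W := by
    rintro c ⟨hc1, hc2⟩ w hw
    rcases hCcl c hc1 w hw with h1 | h1 <;> rcases hFcl c hc2 w hw with h2 | h2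
    · exact Or.inl ⟨h1, h2⟩
    · exact Or.inr (Or.inl (Or.inl ⟨h1, h2⟩))
    · exact Or.inr (Or.inl (Or.inr ⟨h1, h2⟩))
    · exact Or.inr (Or.inr ⟨h1, h2⟩)
  have closure2 : ∀ c ∈ D ∩ E, ∀ w, G.Adj c w → w ∈ (D ∩ E) ∪ W' := by
    rintro c ⟨hc1, hc2⟩ w hw
    rcases hDcl c hc1 w hw with h1 | h1 <;> rcases hEcl c hc2 w hw with h2 | h2
    · exact Or.inl ⟨h1, h2⟩
    · exact Or.inr (Or.inl (Or.inl ⟨h1, h2⟩))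
    · exact Or.inr (Or.inl (Or.inr ⟨h1, h2⟩))
    · exact Or.inr (Or.inr ⟨h1, h2⟩)
  have hyW : y ∉ W := by
    intro hmem
    simp only [hW, hW', Set.mem_union, Set.mem_inter_iff] at hmem
    rcases hmem with (⟨h1, h2⟩ | ⟨h1, h2⟩) | ⟨h1, h2⟩
    · exact hFT y hyF h2
    · exact hCS y hyC h1
    · exact hCS y hyC h1
  have hzW : z ∉ W := by
    intro hmem
    simp only [hW, hW', Set.mem_union, Set.mem_inter_iff] at hmem
    rcases hmem with (⟨h1, h2⟩ | ⟨h1, h2⟩) | ⟨h1, h2⟩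
    · exact hCD z h1 hzD
    · exact hDS z hzD h1
    · exact hDS z hzD h1
  have hyW' : y ∉ W' := by
    intro hmem
    simp only [hW, hW', Set.mem_union, Set.mem_inter_iff] at hmem
    rcases hmem with (⟨h1, h2⟩ | ⟨h1, h2⟩) | ⟨h1, h2⟩
    · exact hCD y hyC h1
    · exact hCS y hyC h1
    · exact hCS y hyC h1
  have hzW' : z ∉ W' := by
    intro hmem
    simp only [hW, hW', Set.mem_union, Set.mem_inter_iff] at hmem
    rcases hmem with (⟨h1, h2⟩ | ⟨h1, h2⟩) | ⟨h1, h2⟩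
    · exact hET z hzE h2
    · exact hDS z hzD h1
    · exact hDS z hzD h1
  have hzCF : z ∉ C ∩ F := fun h => hCD z h.1 hzD
  have hyDE : y ∉ D ∩ E := fun h => hCD y hyC h.1
  have hnCF : ¬ Avoid G W y z := not_avoid_of_confine closure1 ⟨hyC, hyF⟩ hzCF
  have hnDE : ¬ Avoid G W' z y := not_avoid_of_confine closure2 ⟨hzD, hzE⟩ hyDE
  have hWle : W.ncard ≤ (C ∩ T).ncard + (S ∩ F).ncard + (S ∩ T).ncard := by
    calc W.ncard ≤ ((C ∩ T) ∪ (S ∩ F)).ncard + (S ∩ T).ncard := Set.ncard_union_le _ _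
      _ ≤ (C ∩ T).ncard + (S ∩ F).ncard + (S ∩ T).ncard := by
          have := Set.ncard_union_le (C ∩ T) (S ∩ F); omega
  have hW'le : W'.ncard ≤ (D ∩ T).ncard + (S ∩ E).ncard + (S ∩ T).ncard := by
    calc W'.ncard ≤ ((D ∩ T) ∪ (S ∩ E)).ncard + (S ∩ T).ncard := Set.ncard_union_le _ _
      _ ≤ (D ∩ T).ncard + (S ∩ E).ncard + (S ∩ T).ncard := by
          have := Set.ncard_union_le (D ∩ T) (S ∩ E); omega
  have hTsum : (C ∩ T).ncard + (D ∩ T).ncard + (S ∩ T).ncard ≤ T.ncard :=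
    ncard_triple Set.inter_subset_right Set.inter_subset_right Set.inter_subset_right
      (fun w hw hw2 => hCD w hw.1 hw2.1) (fun w hw hw2 => hCS w hw.1 hw2.1)
      (fun w hw hw2 => hDS w hw.1 hw2.1)
  have hSsum : (S ∩ F).ncard + (S ∩ E).ncard + (S ∩ T).ncard ≤ S.ncard :=
    ncard_triple Set.inter_subset_left Set.inter_subset_left Set.inter_subset_left
      (fun w hw hw2 => hFE w hw.2 hw2.2) (fun w hw hw2 => hFT w hw.2 hw2.2)
      (fun w hw hw2 => hET w hw.2 hw2.2)
  have hW1 : 1 ≤ W.ncard := by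
    have : 0 < W.ncard := (Set.ncard_pos (Set.toFinite _)).mpr
      ⟨x, Or.inl (Or.inl ⟨hxC, hxT⟩)⟩
    omega
  by_cases hW2 : W.ncard ≤ 2
  · -- small first separator
    interval_cases h : W.ncard
    · -- W.ncard = 1
      obtain ⟨w, hw⟩ := Set.ncard_eq_one.mp h
      rw [hw] at hnCF hyW hzW
      exact hnCF (avoid_single hconn htrans (fun hy => hyW hy) (fun hz => hzW hz))
    · -- W.ncard = 2
      obtain ⟨w1, w2, hw12, hw⟩ := Set.ncard_eq_two.mp h
      rw [hw] at hnCF hyW hzW closure1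
      have hm1 : m ≤ (frag G {w1, w2} y).ncard := hmin w1 w2 y z hyW hzW hnCF
      have hfsub : frag G {w1, w2} y ⊆ C ∩ F :=
        frag_subset_of_confine closure1 ⟨hyC, hyF⟩
      have hm2 : (frag G {w1, w2} y).ncard ≤ (C ∩ F).ncard :=
        Set.ncard_le_ncard hfsub (Set.toFinite _)
      have hm3 : (C ∩ F).ncard ≤ C.ncard :=
        Set.ncard_le_ncard Set.inter_subset_left (Set.toFinite _)
      have hCFC : C ∩ F = C :=
        Set.eq_of_subset_of_ncard_le Set.inter_subset_left (by omega) (Set.toFinite _)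
      have hxF : x ∈ F := by
        have hx2 : x ∈ C ∩ F := by rw [hCFC]; exact hxC
        exact hx2.2
      exact hFT x hxF hxT
  · -- W.ncard ≥ 3, so W' is tiny
    push_neg at hW2
    have hW'1 : W'.ncard ≤ 1 := by omega
    by_cases hW'0 : W'.ncard = 0
    · have : W' = ∅ := (Set.ncard_eq_zero (Set.toFinite _)).mp hW'0
      rw [this] at hnDE
      exact hnDE (avoid_empty hconn z y)
    · have h1 : W'.ncard = 1 := by omega
      obtain ⟨w, hw⟩ := Set.ncard_eq_one.mp h1
      rw [hw] at hnDE hyW' hzW'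
      exact hnDE (avoid_single hconn htrans (fun hz => hzW' hz) (fun hy => hyW' hy))

end VT3

namespace VT3

variable {V : Type*} [Fintype V] {G : SimpleGraph V}

lemma ncard_triple_set {x t q : V} (hxt : x ≠ t) (hqx : q ≠ x) (hqt : q ≠ t) :
    ({x, t, q} : Set V).ncard = 3 := by
  rw [Set.ncard_insert_of_notMem (by simp [hxt, hqx.symm]) (Set.toFinite _),
      Set.ncard_insert_of_notMem (by simp [hqt.symm]) (Set.toFinite _),
      Set.ncard_singleton]

lemma caseA (hconn : G.Connected) (hcubic : ∀ v : V, (G.neighborSet v).ncard = 3)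
    (htrans : ∀ u v : V, ∃ e : G ≃g G, e u = v)
    {a b u v x t u' v' : V}
    (hab : a ≠ b)
    (hu : u ∉ ({a, b} : Set V)) (hv : v ∉ ({a, b} : Set V))
    (hnav : ¬ Avoid G {a, b} u v)
    (hxt : x ≠ t)
    (hu' : u' ∉ ({x, t} : Set V)) (hv' : v' ∉ ({x, t} : Set V))
    (hnav' : ¬ Avoid G {x, t} u' v')
    (hTC : ({x, t} : Set V) = frag G {a, b} u) : False := by
  classical
  have hxC : x ∈ frag G {a, b} u := by rw [← hTC]; exact Or.inl rfl
  have htC : t ∈ frag G {a, b} u := by rw [← hTC]; exact Or.inr rfl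
  have hxS : x ∉ ({a, b} : Set V) := frag_disjoint _ _ x hxC
  have htS : t ∉ ({a, b} : Set V) := frag_disjoint _ _ t htC
  -- structure of x and t
  have nbx : G.neighborSet x = {t, a, b} := by
    apply two_closed hcubic
    intro z hz
    have := frag_closed x hxC z hz
    rwa [← hTC] at this
  have nbt : G.neighborSet t = {x, a, b} := by
    apply two_closed hcubic
    intro z hz
    have := frag_closed t htC z hz
    rw [← hTC] at this
    rwa [Set.pair_comm x t] at this
  -- neighbours of x in the two fragments of the cut {x, t}
  obtain ⟨r, hrF, hadjxr⟩ := cut_nbr hconn htrans hu' hv' hnav'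
  have hnav'' : ¬ Avoid G {x, t} v' u' := fun h => hnav' h.symm
  obtain ⟨q, hqF2, hadjxq⟩ := cut_nbr hconn htrans hv' hu' hnav''
  have hFdisj2 : ∀ w, w ∈ frag G {x, t} u' → w ∈ frag G {x, t} v' → False :=
    fun w h1 h2 => hnav' (h1.trans h2.symm)
  have hrxt : r ∉ ({x, t} : Set V) := frag_disjoint _ _ r hrF
  have hqxt : q ∉ ({x, t} : Set V) := frag_disjoint _ _ q hqF2
  have hrS : r ∈ ({a, b} : Set V) := by
    have : r ∈ G.neighborSet x := hadjxr
    rw [nbx] at this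
    rcases this with h | h
    · exact absurd (h : r = t) (by simp at hrxt; exact hrxt.2)
    · exact h
  have hqS : q ∈ ({a, b} : Set V) := by
    have : q ∈ G.neighborSet x := hadjxq
    rw [nbx] at this
    rcases this with h | h
    · exact absurd (h : q = t) (by simp at hqxt; exact hqxt.2)
    · exact h
  have hrq : r ≠ q := fun h => hFdisj2 r hrF (h ▸ hqF2)
  have hSrq : ({a, b} : Set V) = {r, q} := by
    rcases hrS with rfl | hrb
    · rcases hqS with rfl | hqb
      · exact absurd rfl hrq
      · rw [(hqb : q = b)]
    · rcases hqS with rfl | hqb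
      · rw [(hrb : r = b), Set.pair_comm]
      · rw [(hrb : r = b)] at hrq; rw [(hqb : q = b)] at hrq; exact absurd rfl hrq
  have hadjtr : G.Adj t r := by
    have : r ∈ G.neighborSet t := by rw [nbt]; exact Or.inr hrS
    exact this
  have hadjtq : G.Adj t q := by
    have : q ∈ G.neighborSet t := by rw [nbt]; exact Or.inr hqS
    exact this
  -- third neighbour of r
  have hnsub : ¬ (G.neighborSet r ⊆ ({x, t} : Set V)) := by
    intro hsub
    have := Set.ncard_le_ncard hsub (Set.toFinite _)
    rw [hcubic r] at this
    have h2 : ({x, t} : Set V).ncard ≤ 2 := by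
      apply (Set.ncard_insert_le _ _).trans; simp
    omega
  obtain ⟨w, hwnb, hwxt⟩ := Set.not_subset.mp hnsub
  have hadjrw : G.Adj r w := hwnb
  have hwC : w ∉ frag G {a, b} u := by rw [← hTC]; exact hwxt
  have hqC : q ∉ frag G {a, b} u := by
    rw [← hTC]; exact hqxt
  by_cases hwS : w ∈ ({a, b} : Set V)
  · -- the third neighbour of r is q: then {x,t,r,q} is closed, contradicting connectivity
    have hwq : w = q := by
      rw [hSrq] at hwS
      rcases hwS with h | h
      · exact absurd (h : w = r) (fun h' => G.irrefl (h' ▸ hadjrw))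
      · exact h
    have hadjrq : G.Adj r q := hwq ▸ hadjrw
    have nbr : G.neighborSet r = {x, t, q} := by
      have hsub : ({x, t, q} : Set V) ⊆ G.neighborSet r := by
        rintro z (rfl | rfl | rfl)
        · exact hadjxr.symm
        · exact hadjtr.symm
        · exact hadjrq
      refine (Set.eq_of_subset_of_ncard_le hsub ?_ (Set.toFinite _)).symm
      rw [hcubic r, ncard_triple_set hxt (by simp at hqxt; exact hqxt.1)
        (by simp at hqxt; exact hqxt.2)]
    have nbq : G.neighborSet q = {x, t, r} := by
      have hsub : ({x, t, r} : Set V) ⊆ G.neighborSet q := by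
        rintro z (rfl | rfl | rfl)
        · exact hadjxq.symm
        · exact hadjtq.symm
        · exact hadjrq.symm
      refine (Set.eq_of_subset_of_ncard_le hsub ?_ (Set.toFinite _)).symm
      rw [hcubic q, ncard_triple_set hxt (by simp at hrxt; exact hrxt.1)
        (by simp at hrxt; exact hrxt.2)]
    -- now the rest of the graph cannot reach x
    have hvC : v ∉ frag G {a, b} u := fun h => hnav h
    obtain ⟨p0, -⟩ := avoid_empty hconn v x
    have hvD : v ∈ {w : V | w ∉ frag G {a, b} u ∧ w ∉ ({a, b} : Set V)} := ⟨hvC, hv⟩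
    have hxD : x ∉ {w : V | w ∉ frag G {a, b} u ∧ w ∉ ({a, b} : Set V)} :=
      fun h => h.1 hxC
    obtain ⟨d, -, hdfst, hdsnd⟩ := p0.exists_boundary_dart _ hvD hxD
    have hadjd : G.Adj d.fst d.snd := d.adj
    simp only [Set.mem_setOf_eq, not_and, not_not] at hdsnd
    have hfst1 : d.fst ∉ frag G {a, b} u := hdfst.1
    have hfst2 : d.fst ∉ ({a, b} : Set V) := hdfst.2
    by_cases hsndC : d.snd ∈ frag G {a, b} u
    · rw [← hTC] at hsndC
      rcases hsndC with h | h
      · have : d.fst ∈ G.neighborSet x := by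
          rw [(h : d.snd = x)] at hadjd; exact hadjd.symm
        rw [nbx] at this
        rcases this with h1 | h1
        · exact hfst1 (by rw [(h1 : d.fst = t)]; exact htC)
        · exact hfst2 h1
      · have : d.fst ∈ G.neighborSet t := by
          rw [(h : d.snd = t)] at hadjd; exact hadjd.symm
        rw [nbt] at this
        rcases this with h1 | h1
        · exact hfst1 (by rw [(h1 : d.fst = x)]; exact hxC)
        · exact hfst2 h1
    · have hsndS : d.snd ∈ ({a, b} : Set V) := hdsnd hsndC
      rw [hSrq] at hsndS
      rcases hsndS with h | h
      · have : d.fst ∈ G.neighborSet r := by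
          rw [(h : d.snd = r)] at hadjd; exact hadjd.symm
        rw [nbr] at this
        rcases this with h1 | h1 | h1
        · exact hfst1 (by rw [(h1 : d.fst = x)]; exact hxC)
        · exact hfst1 (by rw [(h1 : d.fst = t)]; exact htC)
        · exact hfst2 (by rw [(h1 : d.fst = q)]; exact hqS)
      · have : d.fst ∈ G.neighborSet q := by
          rw [(h : d.snd = q)] at hadjd; exact hadjd.symm
        rw [nbq] at this
        rcases this with h1 | h1 | h1
        · exact hfst1 (by rw [(h1 : d.fst = x)]; exact hxC)
        · exact hfst1 (by rw [(h1 : d.fst = t)]; exact htC)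
        · exact hfst2 (by rw [(h1 : d.fst = r)]; exact hrS)
  · -- the third neighbour of r is in D: then r is a cutvertex
    have hwF : w ∈ frag G {x, t} u' := by
      rcases frag_closed r hrF w hadjrw with h | h
      · exact h
      · exact absurd h hwxt
    set X : Set V := {c | (c ∉ frag G {a, b} u ∧ c ∉ ({a, b} : Set V)) ∧
      c ∈ frag G {x, t} u'} with hX
    have hclX : ∀ c ∈ X, ∀ z, G.Adj c z → z ∈ X ∪ {r} := by
      rintro c ⟨⟨hc1, hc2⟩, hc3⟩ z hz
      have hzF : z ∈ frag G {x, t} u' ∪ {x, t} := frag_closed c hc3 z hz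
      have hzxt : z ∉ ({x, t} : Set V) := by
        rintro (h0 | h0)
        · have hcx : c ∈ G.neighborSet x := by
            rw [(h0 : z = x)] at hz; exact hz.symm
          rw [nbx] at hcx
          rcases hcx with h1 | h1
          · exact hc1 (by rw [(h1 : c = t)]; exact htC)
          · exact hc2 h1
        · have hct : c ∈ G.neighborSet t := by
            rw [(h0 : z = t)] at hz; exact hz.symm
          rw [nbt] at hct
          rcases hct with h1 | h1
          · exact hc1 (by rw [(h1 : c = x)]; exact hxC)
          · exact hc2 h1
      have hzF' : z ∈ frag G {x, t} u' := by
        rcases hzF with h | h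
        · exact h
        · exact absurd h hzxt
      by_cases hzS : z ∈ ({a, b} : Set V)
      · rw [hSrq] at hzS
        rcases hzS with h | h
        · exact Or.inr h
        · exact absurd hzF' (fun h' => hFdisj2 z h' ((h : z = q) ▸ hqF2))
      · by_cases hzC : z ∈ frag G {a, b} u
        · rw [← hTC] at hzC; exact absurd hzC hzxt
        · exact Or.inl ⟨⟨hzC, hzS⟩, hzF'⟩
    have hwX : w ∈ X := ⟨⟨hwC, hwS⟩, hwF⟩
    have hqX : q ∉ X := fun h => h.1.2 hqS
    have hnwq : ¬ Avoid G {r} w q := not_avoid_of_confine hclX hwX hqX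
    have hwr : w ≠ r := fun h => G.irrefl (h ▸ hadjrw)
    exact hnwq (avoid_single hconn htrans hwr hrq.symm)

end VT3

namespace VT3

variable {V : Type*} [Fintype V] {G : SimpleGraph V}

lemma pair_ncard_le (a b : V) : ({a, b} : Set V).ncard ≤ 2 := by
  apply (Set.ncard_insert_le _ _).trans; simp

/-- Common tail: knowing the atom has size two and the structure of `a`'s
neighbourhood, conclude that the transported cut equals the atom. -/
lemma tailA (hconn : G.Connected) (hcubic : ∀ v : V, (G.neighborSet v).ncard = 3)
    (htrans : ∀ u v : V, ∃ e : G ≃g G, e u = v)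
    {a b u v t u' v' : V}
    (hab : a ≠ b)
    (hu : u ∉ ({a, b} : Set V)) (hv : v ∉ ({a, b} : Set V))
    (hnav : ¬ Avoid G {a, b} u v)
    (hxt : u ≠ t)
    (hu' : u' ∉ ({u, t} : Set V)) (hv' : v' ∉ ({u, t} : Set V))
    (hnav' : ¬ Avoid G {u, t} u' v')
    (hC2 : (frag G {a, b} u).ncard = 2)
    (nba : G.neighborSet a = {b, u, t}) : False := by
  classical
  have huC : u ∈ frag G {a, b} u := mem_frag_self hu
  obtain ⟨c1, c2, h12, hC⟩ := Set.ncard_eq_two.mp hC2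
  have hCuy : ∃ y2, y2 ≠ u ∧ frag G {a, b} u = {u, y2} := by
    have : u ∈ ({c1, c2} : Set V) := hC ▸ huC
    rcases this with h | h
    · exact ⟨c2, fun hh => h12 ((h : u = c1).symm.trans hh.symm),
        by rw [hC, ← (h : u = c1)]⟩
    · exact ⟨c1, fun hh => h12 (hh.trans (h : u = c2)),
        by rw [hC, ← (h : u = c2), Set.pair_comm]⟩
  obtain ⟨y2, hy2u, hCeq⟩ := hCuy
  have hy2C : y2 ∈ frag G {a, b} u := by rw [hCeq]; exact Or.inr rfl
  have hy2S : y2 ∉ ({a, b} : Set V) := frag_disjoint _ _ y2 hy2C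
  have nby2 : G.neighborSet y2 = {u, a, b} := by
    apply two_closed hcubic
    intro z hz
    have := frag_closed y2 hy2C z hz
    rw [hCeq] at this
    rwa [Set.pair_comm u y2] at this
  have hadjy2a : G.Adj y2 a := by
    have : a ∈ G.neighborSet y2 := by rw [nby2]; exact Or.inr (Or.inl rfl)
    exact this
  have hy2t : y2 = t := by
    have : y2 ∈ G.neighborSet a := hadjy2a.symm
    rw [nba] at this
    rcases this with h | h | h
    · exact absurd (h : y2 = b) (fun hh => hy2S (Or.inr hh))
    · exact absurd (h : y2 = u) hy2u
    · exact h
  have hTC : ({u, t} : Set V) = frag G {a, b} u := by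
    rw [hCeq, hy2t]
  exact caseA hconn hcubic htrans hab hu hv hnav hxt hu' hv' hnav' hTC

lemma avoid_pair (hconn : G.Connected) (hcubic : ∀ v : V, (G.neighborSet v).ncard = 3)
    (htrans : ∀ u v : V, ∃ e : G ≃g G, e u = v) :
    ∀ a b u v : V, u ∉ ({a, b} : Set V) → v ∉ ({a, b} : Set V) → Avoid G {a, b} u v := by
  classical
  by_contra hcon
  push_neg at hcon
  obtain ⟨a0, b0, u0, v0, hu0, hv0, hn0⟩ := hcon
  have hBad : ∃ n, ∃ a b u v : V, u ∉ ({a, b} : Set V) ∧ v ∉ ({a, b} : Set V) ∧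
      ¬ Avoid G {a, b} u v ∧ (frag G {a, b} u).ncard = n :=
    ⟨_, a0, b0, u0, v0, hu0, hv0, hn0, rfl⟩
  obtain ⟨a, b, u, v, hu, hv, hnav, hm⟩ := Nat.find_spec hBad
  set m := Nat.find hBad with hmdef
  have hmin : ∀ a' b' u' v' : V, u' ∉ ({a', b'} : Set V) → v' ∉ ({a', b'} : Set V) →
      ¬ Avoid G {a', b'} u' v' → m ≤ (frag G {a', b'} u').ncard :=
    fun a' b' u' v' h1 h2 h3 => Nat.find_min' hBad ⟨a', b', u', v', h1, h2, h3, rfl⟩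
  have hab : a ≠ b := by
    rintro rfl
    rw [Set.pair_eq_singleton] at hu hv hnav
    exact hnav (avoid_single hconn htrans (by simpa using hu) (by simpa using hv))
  have hm2 : 2 ≤ m := hm ▸ frag_two_le hcubic hu
  -- transport the cut to contain `u`
  obtain ⟨e, he⟩ := htrans a u
  set t := e b with ht
  have hxt : u ≠ t := by
    intro h
    rw [← he] at h
    exact hab (e.injective h)
  have hTpair : (⇑e '' ({a, b} : Set V)) = {u, t} := by rw [Set.image_pair, he]
  have himg : ∀ w1 w2 : V, Avoid G {u, t} w1 w2 →
      Avoid G {a, b} (e.symm w1) (e.symm w2) := by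
    intro w1 w2 h
    have h2 := h.map e.symm
    have himg2 : (⇑e.symm '' ({u, t} : Set V)) = ({a, b} : Set V) := by
      rw [← hTpair, Set.image_image]; simp
    rwa [himg2] at h2
  have hnav' : ¬ Avoid G {u, t} (e u) (e v) := by
    intro h
    have h2 := himg _ _ h
    rw [RelIso.symm_apply_apply, RelIso.symm_apply_apply] at h2
    exact hnav h2
  have hu' : e u ∉ ({u, t} : Set V) := by
    rintro (h | h)
    · have h2 : e u = e a := by rw [he]; exact h
      exact hu (Or.inl (e.injective h2))
    · rw [ht] at h
      exact hu (Or.inr (e.injective h))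
  have hv' : e v ∉ ({u, t} : Set V) := by
    rintro (h | h)
    · have h2 : e v = e a := by rw [he]; exact h
      exact hv (Or.inl (e.injective h2))
    · rw [ht] at h
      exact hv (Or.inr (e.injective h))
  have hF : frag G {u, t} (e u) = ⇑e '' frag G {a, b} u := by
    rw [← hTpair, frag_map]
  have hFm : (frag G {u, t} (e u)).ncard = m := by
    rw [hF, Set.ncard_image_of_injective _ e.injective, hm]
  -- names for the six regions
  set C := frag G {a, b} u with hCdef
  set Fr := frag G {u, t} (e u) with hFdef
  set D : Set V := {w | w ∉ ({a, b} : Set V) ∧ w ∉ C} with hDdef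
  set E : Set V := {w | w ∉ ({u, t} : Set V) ∧ w ∉ Fr} with hEdef
  have hCcl : ∀ c ∈ C, ∀ w, G.Adj c w → w ∈ C ∪ {a, b} := frag_closed
  have hFcl : ∀ c ∈ Fr, ∀ w, G.Adj c w → w ∈ Fr ∪ {u, t} := frag_closed
  have hDcl : ∀ c ∈ D, ∀ w, G.Adj c w → w ∈ D ∪ {a, b} := by
    rintro c ⟨hc1, hc2⟩ w hw
    by_cases hwS : w ∈ ({a, b} : Set V)
    · exact Or.inr hwS
    · refine Or.inl ⟨hwS, fun hwC => hc2 ?_⟩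
      rcases frag_closed w hwC c hw.symm with h | h
      · exact h
      · exact absurd h hc1
  have hEcl : ∀ c ∈ E, ∀ w, G.Adj c w → w ∈ E ∪ {u, t} := by
    rintro c ⟨hc1, hc2⟩ w hw
    by_cases hwS : w ∈ ({u, t} : Set V)
    · exact Or.inr hwS
    · refine Or.inl ⟨hwS, fun hwC => hc2 ?_⟩
      rcases frag_closed w hwC c hw.symm with h | h
      · exact h
      · exact absurd h hc1
  have hCS : ∀ w ∈ C, w ∉ ({a, b} : Set V) := frag_disjoint _ _
  have hDS : ∀ w ∈ D, w ∉ ({a, b} : Set V) := fun w hw => hw.1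
  have hCD : ∀ w ∈ C, w ∉ D := fun w hw hw2 => hw2.2 hw
  have hFT : ∀ w ∈ Fr, w ∉ ({u, t} : Set V) := frag_disjoint _ _
  have hET : ∀ w ∈ E, w ∉ ({u, t} : Set V) := fun w hw => hw.1
  have hFE : ∀ w ∈ Fr, w ∉ E := fun w hw hw2 => hw2.2 hw
  have hCm : C.ncard ≤ m := le_of_eq hm
  have huC : u ∈ C := mem_frag_self hu
  have huT : u ∈ ({u, t} : Set V) := Or.inl rfl
  have hnav'symm : ¬ Avoid G {u, t} (e v) (e u) := fun h => hnav' h.symm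
  have hnavsymm : ¬ Avoid G {a, b} v u := fun h => hnav h.symm
  have hfragv'E : frag G {u, t} (e v) ⊆ E := by
    intro w hw
    exact ⟨frag_disjoint _ _ w hw, fun hF2 => hnav' (hF2.trans hw.symm)⟩
  have hfragvD : frag G {a, b} v ⊆ D := by
    intro w hw
    exact ⟨frag_disjoint _ _ w hw, fun hC2 => hnav (hC2.trans hw.symm)⟩
  by_cases hCF : (C ∩ Fr).Nonempty
  · by_cases hDE : (D ∩ E).Nonempty
    · obtain ⟨y, hyC, hyF⟩ := hCF
      obtain ⟨z, hzD, hzE⟩ := hDE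
      exact diag hconn htrans hmin hCm hCcl hDcl hFcl hEcl hCS hDS hCD hFT hET hFE
        (pair_ncard_le a b) (pair_ncard_le u t) huC huT hyC hyF hzD hzE
    · by_cases hCE : (C ∩ E).Nonempty
      · by_cases hDF : (D ∩ Fr).Nonempty
        · obtain ⟨y, hyC, hyE⟩ := hCE
          obtain ⟨z, hzD, hzF⟩ := hDF
          exact diag hconn htrans hmin hCm hCcl hDcl hEcl hFcl hCS hDS hCD hET hFT
            (fun w hw hw2 => hFE w hw2 hw) (pair_ncard_le a b) (pair_ncard_le u t)
            huC huT hyC hyE hzD hzF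
        · -- D ∩ E = ∅ and D ∩ Fr = ∅ : D ⊆ T
          have hDT : D ⊆ ({u, t} : Set V) := by
            intro w hw
            by_contra hwT
            by_cases hwF : w ∈ Fr
            · exact hDF ⟨w, hw, hwF⟩
            · exact hDE ⟨w, hw, hwT, hwF⟩
          have hmD : m ≤ D.ncard :=
            (hmin a b v u hv hu hnavsymm).trans
              (Set.ncard_le_ncard hfragvD (Set.toFinite _))
          have hDT2 : D = {u, t} :=
            Set.eq_of_subset_of_ncard_le hDT (by
              have := pair_ncard_le u t; omega) (Set.toFinite _)
          have : u ∈ D := by rw [hDT2]; exact Or.inl rfl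
          exact this.2 huC
      · -- D ∩ E = ∅ and C ∩ E = ∅ : E ⊆ S
        have hES : E ⊆ ({a, b} : Set V) := by
          intro w hw
          by_contra hwS
          by_cases hwC : w ∈ C
          · exact hCE ⟨w, hwC, hw⟩
          · exact hDE ⟨w, ⟨hwS, hwC⟩, hw⟩
        have hmE : m ≤ E.ncard :=
          (hmin u t (e v) (e u) hv' hu' hnav'symm).trans
            (Set.ncard_le_ncard hfragv'E (Set.toFinite _))
        have hE2 : E = {a, b} :=
          Set.eq_of_subset_of_ncard_le hES (by
            have := pair_ncard_le a b; omega) (Set.toFinite _)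
        have hmle : m ≤ 2 := hmE.trans (hE2 ▸ pair_ncard_le a b)
        have hC2 : C.ncard = 2 := by omega
        have haE : a ∈ E := by rw [hE2]; exact Or.inl rfl
        have nba : G.neighborSet a = {b, u, t} := by
          apply two_closed hcubic
          intro z hz
          have := hEcl a haE z hz
          rwa [hE2] at this
        exact tailA hconn hcubic htrans hab hu hv hnav hxt hu' hv' hnav' hC2 nba
  · by_cases hCE : (C ∩ E).Nonempty
    · by_cases hDF : (D ∩ Fr).Nonempty
      · obtain ⟨y, hyC, hyE⟩ := hCE
        obtain ⟨z, hzD, hzF⟩ := hDF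
        exact diag hconn htrans hmin hCm hCcl hDcl hEcl hFcl hCS hDS hCD hET hFT
          (fun w hw hw2 => hFE w hw2 hw) (pair_ncard_le a b) (pair_ncard_le u t)
          huC huT hyC hyE hzD hzF
      · -- C ∩ Fr = ∅ and D ∩ Fr = ∅ : Fr ⊆ S
        have hFS : Fr ⊆ ({a, b} : Set V) := by
          intro w hw
          by_contra hwS
          by_cases hwC : w ∈ C
          · exact hCF ⟨w, hwC, hw⟩
          · exact hDF ⟨w, ⟨hwS, hwC⟩, hw⟩
        have hF2 : Fr = {a, b} :=
          Set.eq_of_subset_of_ncard_le hFS (by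
            have := pair_ncard_le a b; omega) (Set.toFinite _)
        have hmle : m ≤ 2 := by
          have := Set.ncard_le_ncard hFS (Set.toFinite _)
          have := pair_ncard_le a b
          omega
        have hC2 : C.ncard = 2 := by omega
        have haF : a ∈ Fr := by rw [hF2]; exact Or.inl rfl
        have nba : G.neighborSet a = {b, u, t} := by
          apply two_closed hcubic
          intro z hz
          have := hFcl a haF z hz
          rwa [hF2] at this
        exact tailA hconn hcubic htrans hab hu hv hnav hxt hu' hv' hnav' hC2 nba
    · -- C ∩ Fr = ∅ and C ∩ E = ∅ : C ⊆ T
      have hCT : C ⊆ ({u, t} : Set V) := by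
        intro w hw
        by_contra hwT
        by_cases hwF : w ∈ Fr
        · exact hCF ⟨w, hw, hwF⟩
        · exact hCE ⟨w, hw, hwT, hwF⟩
      have hTC : ({u, t} : Set V) = C :=
        (Set.eq_of_subset_of_ncard_le hCT (by
          have := pair_ncard_le u t; omega) (Set.toFinite _)).symm
      exact caseA hconn hcubic htrans hab hu hv hnav hxt hu' hv' hnav' hTC

end VT3

namespace VT3

variable {V : Type*} [Fintype V] {G : SimpleGraph V}

lemma avoid_le_two (hconn : G.Connected) (hcubic : ∀ v : V, (G.neighborSet v).ncard = 3)
    (htrans : ∀ u v : V, ∃ e : G ≃g G, e u = v)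
    {A : Set V} (hA : A.ncard ≤ 2) {u v : V} (hu : u ∉ A) (hv : v ∉ A) :
    Avoid G A u v := by
  rcases Set.eq_empty_or_nonempty A with rfl | ⟨a, ha⟩
  · exact avoid_empty hconn u v
  by_cases hA1 : A = {a}
  · subst hA1
    exact avoid_single hconn htrans (by simpa using hu) (by simpa using hv)
  · have hb : ∃ b ∈ A, b ≠ a := by
      by_contra hno
      push_neg at hno
      exact hA1 (Set.eq_singleton_iff_unique_mem.mpr ⟨ha, hno⟩)
    obtain ⟨b, hbA, hba⟩ := hb
    have hsub : ({a, b} : Set V) ⊆ A := by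
      rintro w (rfl | rfl)
      · exact ha
      · exact hbA
    have hpair : ({a, b} : Set V).ncard = 2 := Set.ncard_pair hba.symm
    have hAeq : ({a, b} : Set V) = A :=
      Set.eq_of_subset_of_ncard_le hsub (by omega) (Set.toFinite _)
    rw [← hAeq]
    exact avoid_pair hconn hcubic htrans a b u v
      (fun h => hu (hAeq ▸ h)) (fun h => hv (hAeq ▸ h))

end VT3

/-- every finite connected vertex-transitive cubic simple graph
is 3-connected: deleting any set of at most two vertices leaves a connected
induced subgraph. -/
theorem cubic_vertexTransitive_three_connected {V : Type*} [Fintype V]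
    (G : SimpleGraph V) (hconn : G.Connected)
    (hcubic : ∀ v : V, (G.neighborSet v).ncard = 3)
    (htrans : ∀ u v : V, ∃ e : G ≃g G, e u = v) :
    ∀ A : Set V, A.ncard ≤ 2 → (SimpleGraph.induce (Aᶜ) G).Connected := by
  intro A hA
  have hAc : Aᶜ.Nonempty := by
    rw [Set.nonempty_compl]
    intro h
    subst h
    haveI : Nonempty V := hconn.nonempty
    obtain ⟨v0⟩ := ‹Nonempty V›
    have h1 : (G.neighborSet v0).ncard ≤ (Set.univ : Set V).ncard :=
      Set.ncard_le_ncard (Set.subset_univ _) (Set.toFinite _)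
    rw [hcubic v0] at h1
    omega
  obtain ⟨u, hu⟩ := hAc
  apply SimpleGraph.induce_connected_of_patches u hu
  intro v hv
  obtain ⟨p, hp⟩ := VT3.avoid_le_two hconn hcubic htrans hA hu hv
  refine ⟨{x | x ∈ p.support}, fun x hx => hp x hx, p.start_mem_support,
    p.end_mem_support, ?_⟩
  exact (p.connected_induce_support).preconnected _ _
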